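/- arXiv:0804.2512 — 2 statements merged into one kernel-verified Lean document; each statement's English description precedes it below -/
import Mathlib

section
/- Define L(λ) = Γ(γ(λ)) / λ^{γ(λ)} for λ > 0, where γ(λ) is the unique positive solution of λ = exp(ψ(γ)). Then L is strictly monotonically decreasing on (0, ∞), tends to +∞ as λ → 0+, and tends to 0 as λ → +∞. -/
open Real Filter Set

/-- The digamma function `ψ = Γ'/Γ`. -/
noncomputable def digamma (x : ℝ) : ℝ := deriv Real.Gamma x / Real.Gamma x

lemma gamma_ne_neg_nat {x : ℝ} (hx : 0 < x) : ∀ m : ℕ, x ≠ -m := by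
  intro m h
  have : (0:ℝ) ≤ (m:ℝ) := Nat.cast_nonneg m
  rw [h] at hx; linarith

lemma hasDerivAt_logGamma {x : ℝ} (hx : 0 < x) :
    HasDerivAt (fun y => Real.log (Real.Gamma y)) (digamma x) x :=
  ((Real.differentiableAt_Gamma (gamma_ne_neg_nat hx)).hasDerivAt).log
    (Real.Gamma_pos_of_pos hx).ne'

lemma convexOn_F (c : ℝ) :
    ConvexOn ℝ (Ioi 0) (fun x => Real.log (Real.Gamma x) - c * x) := by
  have h1 : ConvexOn ℝ (Ioi (0:ℝ)) (Real.log ∘ Real.Gamma) := Real.convexOn_log_Gamma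
  have h2 : ConcaveOn ℝ (Ioi (0:ℝ)) (fun x : ℝ => c * x) := by
    constructor
    · exact convex_Ioi 0
    · intro x _ y _ a b _ _ _
      simp only [smul_eq_mul]
      apply le_of_eq; ring
  have := h1.sub h2
  exact this

lemma F_min {lam γ g : ℝ} (hlam : 0 < lam) (hγ : 0 < γ) (hg : 0 < g)
    (hψ : Real.exp (digamma γ) = lam) :
    Real.Gamma γ / lam ^ γ ≤ Real.Gamma g / lam ^ g := by
  set c := Real.log lam with hc
  have hcψ : digamma γ = c := by rw [hc, ← hψ, Real.log_exp]
  set F : ℝ → ℝ := fun x => Real.log (Real.Gamma x) - c * x with hF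
  have hconv : ConvexOn ℝ (Ioi 0) F := convexOn_F c
  have hder : HasDerivAt F 0 γ := by
    have h := (hasDerivAt_logGamma hγ).sub ((hasDerivAt_id γ).const_mul c)
    simpa [hF, hcψ, Pi.sub_def] using h
  have hmin : F γ ≤ F g := by
    rcases lt_trichotomy γ g with h | h | h
    · have hs := hconv.le_slope_of_hasDerivAt (mem_Ioi.2 hγ) (mem_Ioi.2 hg) h hder
      rw [slope_def_field] at hs
      have h2 : 0 < g - γ := by linarith
      have h3 := mul_nonneg hs h2.le
      rw [div_mul_cancel₀ _ h2.ne'] at h3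
      linarith
    · rw [h]
    · have hs := hconv.slope_le_of_hasDerivAt (mem_Ioi.2 hg) (mem_Ioi.2 hγ) h hder
      rw [slope_def_field] at hs
      have h2 : 0 < γ - g := by linarith
      rcases div_nonpos_iff.mp hs with ⟨h3, h4⟩ | ⟨h3, h4⟩ <;> linarith
  have e1 : ∀ x : ℝ, 0 < x → Real.log (Real.Gamma x / lam ^ x) = F x := by
    intro x hx
    rw [Real.log_div (Real.Gamma_pos_of_pos hx).ne' (Real.rpow_pos_of_pos hlam x).ne',
      Real.log_rpow hlam]
    ring
  have p1 := div_pos (Real.Gamma_pos_of_pos hγ) (Real.rpow_pos_of_pos hlam γ)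
  have p2 := div_pos (Real.Gamma_pos_of_pos hg) (Real.rpow_pos_of_pos hlam g)
  exact (Real.log_le_log_iff p1 p2).1 (by rw [e1 γ hγ, e1 g hg]; exact hmin)

lemma digamma_mono {a b : ℝ} (ha : 0 < a) (hab : a ≤ b) : digamma a ≤ digamma b := by
  rcases eq_or_lt_of_le hab with rfl | h
  · exact le_rfl
  · have hb : 0 < b := lt_trans ha h
    have hconv := convexOn_F 0
    have h1 := hconv.le_slope_of_hasDerivAt (mem_Ioi.2 ha) (mem_Ioi.2 hb) h
      (by simpa [Pi.sub_def] using (hasDerivAt_logGamma ha).sub ((hasDerivAt_id a).const_mul 0))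
    have h2 := hconv.slope_le_of_hasDerivAt (mem_Ioi.2 ha) (mem_Ioi.2 hb) h
      (by simpa [Pi.sub_def] using (hasDerivAt_logGamma hb).sub ((hasDerivAt_id b).const_mul 0))
    exact le_trans h1 h2

theorem L_strictAnti_and_limits (γfun : ℝ → ℝ)
    (hγ : ∀ lam : ℝ, 0 < lam →
      0 < γfun lam ∧ Real.exp (digamma (γfun lam)) = lam)
    (L : ℝ → ℝ)
    (hL : ∀ lam : ℝ, 0 < lam → L lam = Real.Gamma (γfun lam) / lam ^ γfun lam) :
    StrictAntiOn L (Set.Ioi 0) ∧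
    Filter.Tendsto L (nhdsWithin 0 (Set.Ioi 0)) Filter.atTop ∧
    Filter.Tendsto L Filter.atTop (nhds 0) := by
  have key : ∀ lam g : ℝ, 0 < lam → 0 < g → L lam ≤ Real.Gamma g / lam ^ g := by
    intro lam g hlam hg
    rw [hL lam hlam]
    exact F_min hlam (hγ lam hlam).1 hg (hγ lam hlam).2
  have Lpos : ∀ lam : ℝ, 0 < lam → 0 < L lam := by
    intro lam hlam
    rw [hL lam hlam]
    exact div_pos (Real.Gamma_pos_of_pos (hγ lam hlam).1) (Real.rpow_pos_of_pos hlam _)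
  refine ⟨?_, ?_, ?_⟩
  · intro l1 h1 l2 h2 h12
    rw [mem_Ioi] at h1 h2
    have hγ1 := (hγ l1 h1).1
    calc L l2 ≤ Real.Gamma (γfun l1) / l2 ^ γfun l1 := key l2 (γfun l1) h2 hγ1
      _ < Real.Gamma (γfun l1) / l1 ^ γfun l1 := by
          exact div_lt_div_of_pos_left (Real.Gamma_pos_of_pos hγ1)
            (Real.rpow_pos_of_pos h1 _) (Real.rpow_lt_rpow h1.le h12 hγ1)
      _ = L l1 := (hL l1 h1).symm
  · rw [tendsto_atTop]
    intro M
    have hcont : ContinuousAt Real.Gamma 1 :=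
      (Real.differentiableAt_Gamma (gamma_ne_neg_nat one_pos)).continuousAt
    have hev : ∀ᶠ y in nhds (1:ℝ), (1/2 : ℝ) < Real.Gamma y := by
      have h1 : (1/2 : ℝ) < Real.Gamma 1 := by rw [Real.Gamma_one]; norm_num
      exact hcont (Ioi_mem_nhds h1)
    rw [Metric.eventually_nhds_iff] at hev
    obtain ⟨δ, hδ, hδ2⟩ := hev
    set ε : ℝ := min δ (1 / (2 * (|M| + 1))) with hε
    have hεpos : 0 < ε := lt_min hδ (by positivity)
    have hΓbig : ∀ x : ℝ, 0 < x → x < ε → |M| + 1 < Real.Gamma x := by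
      intro x hx hxε
      have hd : dist (x + 1) 1 < δ := by
        rw [Real.dist_eq]
        have : |x + 1 - 1| = x := by rw [add_sub_cancel_right, abs_of_pos hx]
        rw [this]
        exact lt_of_lt_of_le hxε (min_le_left _ _)
      have hg1 : (1/2 : ℝ) < Real.Gamma (x + 1) := hδ2 hd
      have heq : Real.Gamma x = Real.Gamma (x + 1) / x := by
        rw [Real.Gamma_add_one hx.ne']
        field_simp
      rw [heq]
      have hxe2 : x < 1 / (2 * (|M| + 1)) := lt_of_lt_of_le hxε (min_le_right _ _)
      have h3 : (1/2 : ℝ) / x < Real.Gamma (x + 1) / x := by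
        exact div_lt_div_of_pos_right hg1 hx
      have h4 : |M| + 1 < (1/2 : ℝ) / x := by
        rw [lt_div_iff₀ hx]
        have hM : 0 < |M| + 1 := by positivity
        calc (|M| + 1) * x < (|M| + 1) * (1 / (2 * (|M| + 1))) := by
              exact mul_lt_mul_of_pos_left hxe2 hM
          _ = 1/2 := by field_simp
      linarith
    set c : ℝ := min 1 (Real.exp (digamma ε)) with hc
    have hcpos : 0 < c := lt_min one_pos (Real.exp_pos _)
    filter_upwards [Ioo_mem_nhdsGT_of_mem (show (0:ℝ) ∈ Ico 0 c from ⟨le_refl 0, hcpos⟩)]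
      with lam hlam
    obtain ⟨hlam0, hlamc⟩ := hlam
    have hγl := hγ lam hlam0
    have hγε : γfun lam < ε := by
      by_contra hcon
      push_neg at hcon
      have := digamma_mono hεpos hcon
      have h5 : Real.exp (digamma ε) ≤ Real.exp (digamma (γfun lam)) := Real.exp_le_exp.2 this
      rw [hγl.2] at h5
      exact absurd (lt_of_lt_of_le hlamc (min_le_right _ _)) (not_lt.2 h5)
    have hΓ : |M| + 1 < Real.Gamma (γfun lam) := hΓbig _ hγl.1 hγε
    have hrp : lam ^ γfun lam ≤ 1 :=
      Real.rpow_le_one hlam0.le (le_of_lt (lt_of_lt_of_le hlamc (min_le_left _ _))) hγl.1.le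
    have hLlb : Real.Gamma (γfun lam) ≤ L lam := by
      rw [hL lam hlam0, le_div_iff₀ (Real.rpow_pos_of_pos hlam0 _)]
      exact mul_le_of_le_one_right (Real.Gamma_pos_of_pos hγl.1).le hrp
    have : M ≤ |M| + 1 := by have := le_abs_self M; linarith
    linarith
  · have h0 : ∀ᶠ lam in atTop, 0 ≤ L lam :=
      (eventually_gt_atTop 0).mono fun lam hlam => (Lpos lam hlam).le
    have h1 : ∀ᶠ lam in atTop, L lam ≤ 1 / lam :=
      (eventually_gt_atTop 0).mono fun lam hlam => by
        have := key lam 1 hlam one_pos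
        simpa [Real.Gamma_one, Real.rpow_one] using this
    have h2 : Tendsto (fun lam : ℝ => 1 / lam) atTop (nhds 0) := by
      simpa [one_div] using tendsto_inv_atTop_zero
    exact squeeze_zero' h0 h1 h2
end

section
/- With L(λ) = Γ(γ(λ))/λ^{γ(λ)} where λ = exp(ψ(γ(λ))), as λ → +∞ one has ln L(λ) = -λ(1 + o(1)); in particular, lim_{λ→∞} (ln L(λ))/λ = -1. -/
open Real Filter Set

lemma hasDerivAt_logGamma_s12 {x : ℝ} (hx : 0 < x) :
    HasDerivAt (log ∘ Real.Gamma) (digamma x) x := by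
  have hd : DifferentiableAt ℝ Real.Gamma x := by
    apply Real.differentiableAt_Gamma
    intro m
    exact ((neg_nonpos.mpr (Nat.cast_nonneg m)).trans_lt hx).ne'
  have := hd.hasDerivAt.log (Real.Gamma_pos_of_pos hx).ne'
  exact this

lemma digamma_le_log {x : ℝ} (hx : 0 < x) : digamma x ≤ log x := by
  have h := Real.convexOn_log_Gamma.le_slope_of_hasDerivAt (S := Ioi 0)
    (mem_Ioi.2 hx) (mem_Ioi.2 (by linarith : (0:ℝ) < x + 1)) (lt_add_one x)
    (hasDerivAt_logGamma_s12 hx)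
  rwa [slope_def_field, Function.comp_apply, Function.comp_apply,
    Real.Gamma_add_one hx.ne', Real.log_mul hx.ne' (Real.Gamma_pos_of_pos hx).ne',
    add_sub_cancel_left, add_sub_cancel_right, div_one] at h

lemma log_le_digamma {x : ℝ} (hx : 1 < x) : log (x - 1) ≤ digamma x := by
  have hx1 : (0:ℝ) < x - 1 := by linarith
  have h := Real.convexOn_log_Gamma.slope_le_of_hasDerivAt (S := Ioi 0)
    (mem_Ioi.2 hx1) (mem_Ioi.2 (by linarith : (0:ℝ) < x)) (by linarith)
    (hasDerivAt_logGamma_s12 (by linarith))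
  have hG : Real.Gamma x = (x - 1) * Real.Gamma (x - 1) := by
    have := Real.Gamma_add_one hx1.ne'
    rwa [sub_add_cancel] at this
  rwa [slope_def_field, Function.comp_apply, Function.comp_apply, hG,
    Real.log_mul hx1.ne' (Real.Gamma_pos_of_pos hx1).ne',
    add_sub_cancel_right, sub_sub_cancel, div_one] at h

lemma digamma_monotoneOn : MonotoneOn digamma (Ioi (0:ℝ)) := by
  have h := Real.convexOn_log_Gamma.monotoneOn_deriv
    (fun x hx => (hasDerivAt_logGamma_s12 (mem_Ioi.1 hx)).differentiableAt)
  intro a ha b hb hab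
  have ea : deriv (log ∘ Real.Gamma) a = digamma a := (hasDerivAt_logGamma_s12 (mem_Ioi.1 ha)).deriv
  have eb : deriv (log ∘ Real.Gamma) b = digamma b := (hasDerivAt_logGamma_s12 (mem_Ioi.1 hb)).deriv
  rw [← ea, ← eb]
  exact h ha hb hab

lemma logGamma_eq_integral {x : ℝ} (hx : 2 ≤ x) :
    log (Real.Gamma x) = ∫ t in (2:ℝ)..x, digamma t := by
  have hsub : uIcc (2:ℝ) x ⊆ Ioi 0 := by
    rw [uIcc_of_le hx]
    intro t ht
    exact lt_of_lt_of_le two_pos ht.1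
  have hint : IntervalIntegrable digamma MeasureTheory.volume 2 x :=
    (digamma_monotoneOn.mono hsub).intervalIntegrable
  have h := intervalIntegral.integral_eq_sub_of_hasDerivAt
    (f := log ∘ Real.Gamma) (f' := digamma)
    (fun t ht => hasDerivAt_logGamma_s12 (hsub ht)) hint
  rw [h, Function.comp_apply, Function.comp_apply, Real.Gamma_two, Real.log_one, sub_zero]

lemma logGamma_lower {x : ℝ} (hx : 2 ≤ x) :
    (x - 1) * log (x - 1) - (x - 1) + 1 ≤ log (Real.Gamma x) := by
  rw [logGamma_eq_integral hx]
  have hsub : uIcc (2:ℝ) x ⊆ Ioi 0 := by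
    rw [uIcc_of_le hx]; intro t ht; exact lt_of_lt_of_le two_pos ht.1
  have h1 : IntervalIntegrable digamma MeasureTheory.volume 2 x :=
    (digamma_monotoneOn.mono hsub).intervalIntegrable
  have h2 : IntervalIntegrable (fun t => log (t - 1)) MeasureTheory.volume 2 x := by
    apply MonotoneOn.intervalIntegrable
    intro a ha b hb hab
    rw [uIcc_of_le hx] at ha
    exact Real.log_le_log (by linarith [ha.1]) (by linarith)
  have hmono := intervalIntegral.integral_mono_on hx h2 h1
    (fun t ht => log_le_digamma (by linarith [ht.1]))
  refine le_trans (le_of_eq ?_) hmono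
  have e1 := intervalIntegral.integral_comp_sub_right (a := (2:ℝ)) (b := x) Real.log 1
  rw [e1, integral_log]
  norm_num

lemma logGamma_upper {x : ℝ} (hx : 2 ≤ x) :
    log (Real.Gamma x) ≤ x * log x - x - (2 * log 2 - 2) := by
  rw [logGamma_eq_integral hx]
  have hsub : uIcc (2:ℝ) x ⊆ Ioi 0 := by
    rw [uIcc_of_le hx]; intro t ht; exact lt_of_lt_of_le two_pos ht.1
  have h1 : IntervalIntegrable digamma MeasureTheory.volume 2 x :=
    (digamma_monotoneOn.mono hsub).intervalIntegrable
  have h2 : IntervalIntegrable log MeasureTheory.volume 2 x := by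
    apply MonotoneOn.intervalIntegrable
    intro a ha b hb hab
    exact Real.log_le_log (hsub ha) hab
  have hmono := intervalIntegral.integral_mono_on hx h1 h2
    (fun t ht => digamma_le_log (lt_of_lt_of_le two_pos ht.1))
  refine le_trans hmono (le_of_eq ?_)
  rw [integral_log]
  ring

lemma tendsto_sub_one_div : Tendsto (fun x : ℝ => (x - 1) / x) atTop (nhds 1) := by
  have h : Tendsto (fun x : ℝ => 1 - x⁻¹) atTop (nhds (1 - 0)) :=
    tendsto_const_nhds.sub tendsto_inv_atTop_zero
  rw [sub_zero] at h
  refine h.congr' ?_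
  filter_upwards [eventually_ge_atTop (1:ℝ)] with x hx
  field_simp

lemma tendsto_aux_log_ratio : Tendsto (fun x : ℝ => log (x - 1) - log x) atTop (nhds 0) := by
  have h : Tendsto (fun x : ℝ => log ((x - 1) / x)) atTop (nhds 0) := by
    have := (Real.continuousAt_log one_ne_zero).tendsto.comp tendsto_sub_one_div
    rw [Real.log_one] at this; exact this
  refine h.congr' ?_
  filter_upwards [eventually_ge_atTop (2:ℝ)] with x hx
  rw [Real.log_div (by linarith) (by linarith)]

lemma tendsto_log_div : Tendsto (fun x : ℝ => log x / x) atTop (nhds 0) := by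
  simpa using Real.isLittleO_log_id_atTop.tendsto_div_nhds_zero

lemma tendsto_h : Tendsto (fun x : ℝ => log (Real.Gamma x) / x - digamma x) atTop (nhds (-1)) := by
  set c : ℝ := 2 * log 2 - 2 with hc
  have hlo : Tendsto (fun x : ℝ =>
      ((x - 1) / x) * (log (x - 1) - log x) - log x / x - (x - 1) / x + x⁻¹)
      atTop (nhds (-1)) := by
    have := (((tendsto_sub_one_div.mul tendsto_aux_log_ratio).sub tendsto_log_div).sub
      tendsto_sub_one_div).add tendsto_inv_atTop_zero
    norm_num at this
    exact this
  have hhi : Tendsto (fun x : ℝ =>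
      -(log (x - 1) - log x) - 1 - c * x⁻¹) atTop (nhds (-1)) := by
    have := (tendsto_aux_log_ratio.neg.sub (tendsto_const_nhds (x := (1:ℝ)))).sub
      ((tendsto_inv_atTop_zero (𝕜 := ℝ)).const_mul c)
    norm_num at this
    exact this.congr (fun x => by ring)
  refine tendsto_of_tendsto_of_tendsto_of_le_of_le' hlo hhi ?_ ?_
  · filter_upwards [eventually_ge_atTop (2:ℝ)] with x hx
    have hx0 : (0:ℝ) < x := by linarith
    calc ((x - 1) / x) * (log (x - 1) - log x) - log x / x - (x - 1) / x + x⁻¹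
        = ((x - 1) * log (x - 1) - (x - 1) + 1) / x - log x := by
          field_simp
          ring
      _ ≤ log (Real.Gamma x) / x - digamma x :=
          sub_le_sub ((div_le_div_iff_of_pos_right hx0).mpr (logGamma_lower hx))
            (digamma_le_log hx0)
  · filter_upwards [eventually_ge_atTop (2:ℝ)] with x hx
    have hx0 : (0:ℝ) < x := by linarith
    calc log (Real.Gamma x) / x - digamma x
        ≤ (x * log x - x - c) / x - log (x - 1) :=
          sub_le_sub ((div_le_div_iff_of_pos_right hx0).mpr (logGamma_upper hx))
            (log_le_digamma (by linarith))
      _ = -(log (x - 1) - log x) - 1 - c * x⁻¹ := by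
          field_simp
          ring

theorem log_L_div_lam_tendsto_neg_one (γfun : ℝ → ℝ)
    (hγ : ∀ lam : ℝ, 0 < lam →
      0 < γfun lam ∧ Real.exp (digamma (γfun lam)) = lam)
    (L : ℝ → ℝ)
    (hL : ∀ lam : ℝ, 0 < lam → L lam = Real.Gamma (γfun lam) / lam ^ γfun lam) :
    Filter.Tendsto (fun lam : ℝ => Real.log (L lam) / lam)
      Filter.atTop (nhds (-1)) := by
  have hdig : ∀ lam : ℝ, 0 < lam → digamma (γfun lam) = log lam := fun lam hlam => by
    rw [← Real.log_exp (digamma (γfun lam)), (hγ lam hlam).2]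
  have hge : ∀ lam : ℝ, 0 < lam → lam ≤ γfun lam := by
    intro lam hlam
    have h1 : log lam ≤ log (γfun lam) := by
      rw [← hdig lam hlam]; exact digamma_le_log (hγ lam hlam).1
    calc lam = exp (log lam) := (Real.exp_log hlam).symm
      _ ≤ exp (log (γfun lam)) := Real.exp_le_exp.mpr h1
      _ = γfun lam := Real.exp_log (hγ lam hlam).1
  have hle : ∀ lam : ℝ, 1 < lam → γfun lam ≤ lam + 1 := by
    intro lam hlam
    have hlam0 : (0:ℝ) < lam := by linarith
    have hγ1 : 1 < γfun lam := lt_of_lt_of_le hlam (hge lam hlam0)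
    have h1 : log (γfun lam - 1) ≤ log lam := by
      rw [← hdig lam hlam0]; exact log_le_digamma hγ1
    have := Real.exp_le_exp.mpr h1
    rw [Real.exp_log (by linarith), Real.exp_log hlam0] at this
    linarith
  have hγtop : Tendsto γfun atTop atTop := by
    apply tendsto_atTop_mono' atTop ?_ tendsto_id
    filter_upwards [eventually_gt_atTop (0:ℝ)] with lam hlam
    exact hge lam hlam
  have hratio : Tendsto (fun lam => γfun lam / lam) atTop (nhds 1) := by
    have hhi : Tendsto (fun lam : ℝ => 1 + lam⁻¹) atTop (nhds (1 + 0)) :=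
      tendsto_const_nhds.add tendsto_inv_atTop_zero
    rw [add_zero] at hhi
    refine tendsto_of_tendsto_of_tendsto_of_le_of_le' tendsto_const_nhds hhi ?_ ?_
    · filter_upwards [eventually_gt_atTop (1:ℝ)] with lam hlam
      exact (one_le_div (by linarith)).mpr (hge lam (by linarith))
    · filter_upwards [eventually_gt_atTop (1:ℝ)] with lam hlam
      have hlam0 : (0:ℝ) < lam := by linarith
      calc γfun lam / lam ≤ (lam + 1) / lam := by
            gcongr
            exact hle lam hlam
        _ = 1 + lam⁻¹ := by field_simp
  have hcomp : Tendsto (fun lam => log (Real.Gamma (γfun lam)) / γfun lam - digamma (γfun lam))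
      atTop (nhds (-1)) := tendsto_h.comp hγtop
  have hmul := hratio.mul hcomp
  rw [one_mul] at hmul
  refine hmul.congr' ?_
  filter_upwards [eventually_gt_atTop (1:ℝ)] with lam hlam
  have hlam0 : (0:ℝ) < lam := by linarith
  have hγpos := (hγ lam hlam0).1
  rw [hL lam hlam0, Real.log_div (Real.Gamma_pos_of_pos hγpos).ne'
    (Real.rpow_pos_of_pos hlam0 _).ne', Real.log_rpow hlam0, hdig lam hlam0]
  field_simp
end
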